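/- Let Ω ⊆ ℝ³ be open and τ : Ω → Sym a twice continuously differentiable field of symmetric 3×3 matrices. Then Ξ⁻¹(curl τ) = (curl τ)ᵀ at every point (since curl τ is trace-free), and the matrix field J τ = curl((curl τ)ᵀ) is symmetric on Ω. -/

import Mathlib

open Matrix

/-- `Ξ⁻¹ μ = μᵀ − (1/2)tr(μ)·I` on 3×3 real matrices. -/
noncomputable def XiInv (μ : Matrix (Fin 3) (Fin 3) ℝ) : Matrix (Fin 3) (Fin 3) ℝ :=
  μᵀ - ((1 / 2 : ℝ) * Matrix.trace μ) • (1 : Matrix (Fin 3) (Fin 3) ℝ)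

/-- The partial derivative `∂ⱼ f` of a scalar field on `ℝ³`. -/
noncomputable def pd (j : Fin 3) (f : (Fin 3 → ℝ) → ℝ) (x : Fin 3 → ℝ) : ℝ :=
  fderiv ℝ f x (Pi.single j 1)

/-- The curl of a vector field `u : ℝ³ → ℝ³`. -/
noncomputable def curlVec (u : (Fin 3 → ℝ) → (Fin 3 → ℝ)) (x : Fin 3 → ℝ) : Fin 3 → ℝ :=
  ![pd 1 (fun y => u y 2) x - pd 2 (fun y => u y 1) x,
    pd 2 (fun y => u y 0) x - pd 0 (fun y => u y 2) x,
    pd 0 (fun y => u y 1) x - pd 1 (fun y => u y 0) x]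

/-- The row-wise curl of a matrix field. -/
noncomputable def curlMat (τ : (Fin 3 → ℝ) → Matrix (Fin 3) (Fin 3) ℝ)
    (x : Fin 3 → ℝ) : Matrix (Fin 3) (Fin 3) ℝ :=
  Matrix.of fun i j => curlVec (fun y => τ y i) x j

lemma pd_congr {f g : (Fin 3 → ℝ) → ℝ} {x : Fin 3 → ℝ} (h : f =ᶠ[nhds x] g) (j : Fin 3) :
    pd j f x = pd j g x := by unfold pd; rw [h.fderiv_eq]

lemma pd_sub {f g : (Fin 3 → ℝ) → ℝ} {x : Fin 3 → ℝ} (hf : DifferentiableAt ℝ f x)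
    (hg : DifferentiableAt ℝ g x) (j : Fin 3) :
    pd j (fun y => f y - g y) x = pd j f x - pd j g x := by
  unfold pd; rw [fderiv_fun_sub hf hg]; rfl

lemma pd_diff {f : (Fin 3 → ℝ) → ℝ} {x : Fin 3 → ℝ} (hf : ContDiffAt ℝ 2 f x) (c : Fin 3) :
    DifferentiableAt ℝ (fun y => pd c f y) x := by
  unfold pd
  exact ((hf.fderiv_right (m := 1) (by norm_num)).differentiableAt one_ne_zero).clm_apply
    (differentiableAt_const _)

lemma pd_comm {f : (Fin 3 → ℝ) → ℝ} {x : Fin 3 → ℝ} (hf : ContDiffAt ℝ 2 f x) (a c : Fin 3) :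
    pd a (fun y => pd c f y) x = pd c (fun y => pd a f y) x := by
  have hd : DifferentiableAt ℝ (fderiv ℝ f) x :=
    (hf.fderiv_right (m := 1) (by norm_num)).differentiableAt one_ne_zero
  have key : ∀ v w : Fin 3 → ℝ, fderiv ℝ (fun y => fderiv ℝ f y v) x w
      = fderiv ℝ (fderiv ℝ f) x w v := by
    intro v w
    rw [fderiv_clm_apply hd (differentiableAt_const v)]
    simp
  unfold pd
  rw [key, key]
  exact (hf.isSymmSndFDerivAt (by simp [minSmoothness_of_isRCLikeNormedField])).eq _ _

/-- If `τ : Ω → Sym` is a `C²` symmetric matrix field on an open `Ω ⊆ ℝ³`, then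
`Ξ⁻¹(curl τ) = (curl τ)ᵀ` pointwise (since `curl τ` is trace-free), and
`J τ = curl((curl τ)ᵀ)` is a symmetric matrix field on `Ω`. -/
theorem J_symmetric_on_sym (Ω : Set (Fin 3 → ℝ)) (hΩ : IsOpen Ω)
    (τ : (Fin 3 → ℝ) → Matrix (Fin 3) (Fin 3) ℝ)
    (hτ : ∀ i j, ContDiffOn ℝ 2 (fun y => τ y i j) Ω)
    (hsym : ∀ x ∈ Ω, (τ x)ᵀ = τ x) :
    ∀ x ∈ Ω,
      XiInv (curlMat τ x) = (curlMat τ x)ᵀ ∧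
      (curlMat (fun y => (curlMat τ y)ᵀ) x)ᵀ = curlMat (fun y => (curlMat τ y)ᵀ) x := by
  intro x hx
  -- symmetry of entries on all of Ω
  have hsym' : ∀ (b d : Fin 3), ∀ y ∈ Ω, τ y b d = τ y d b := by
    intro b d y hy
    have h := hsym y hy
    calc τ y b d = (τ y)ᵀ d b := rfl
    _ = τ y d b := by rw [h]
  -- swapping entry indices under one derivative, valid at every point of Ω
  have hsw : ∀ (c b d : Fin 3), ∀ z ∈ Ω, pd c (fun y => τ y b d) z = pd c (fun y => τ y d b) z := by
    intro c b d z hz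
    apply pd_congr
    filter_upwards [hΩ.mem_nhds hz] with y hy
    exact hsym' b d y hy
  have hCA : ∀ b d : Fin 3, ContDiffAt ℝ 2 (fun y => τ y b d) x :=
    fun b d => (hτ b d).contDiffAt (hΩ.mem_nhds hx)
  have hdiff : ∀ c b d : Fin 3, DifferentiableAt ℝ (fun y => pd c (fun z => τ z b d) y) x :=
    fun c b d => pd_diff (hCA b d) c
  have psub : ∀ a c c' b d b' d' : Fin 3,
      pd a (fun y => pd c (fun z => τ z b d) y - pd c' (fun z => τ z b' d') y) x
        = pd a (fun y => pd c (fun z => τ z b d) y) x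
          - pd a (fun y => pd c' (fun z => τ z b' d') y) x :=
    fun a c c' b d b' d' => pd_sub (hdiff c b d) (hdiff c' b' d') a
  -- swapping entry indices under two derivatives
  have hswap2 : ∀ a c b d : Fin 3,
      pd a (fun y => pd c (fun z => τ z b d) y) x
        = pd a (fun y => pd c (fun z => τ z d b) y) x := by
    intro a c b d
    apply pd_congr
    filter_upwards [hΩ.mem_nhds hx] with z hz
    exact hsw c b d z hz
  have hcm : ∀ a c b d : Fin 3,
      pd a (fun y => pd c (fun z => τ z b d) y) x
        = pd c (fun y => pd a (fun z => τ z b d) y) x :=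
    fun a c b d => pd_comm (hCA b d) a c
  have hfull : ∀ a c b d : Fin 3,
      pd a (fun y => pd c (fun z => τ z b d) y) x
        = pd c (fun y => pd a (fun z => τ z d b) y) x :=
    fun a c b d => (hcm a c b d).trans (hswap2 c a b d)
  constructor
  · -- trace of curl τ vanishes
    have htr : Matrix.trace (curlMat τ x) = 0 := by
      rw [Matrix.trace_fin_three]
      simp only [curlMat, curlVec, Matrix.of_apply, Matrix.cons_val_zero, Matrix.cons_val_one,
        Matrix.head_cons, Matrix.cons_val_two, Matrix.tail_cons]
      rw [hsw 1 0 2 x hx, hsw 2 0 1 x hx, hsw 0 1 2 x hx]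
      ring
    unfold XiInv
    rw [htr]
    simp
  · ext i j
    fin_cases i <;> fin_cases j <;>
      simp [curlMat, curlVec, Matrix.transpose_apply] <;>
      simp only [psub] <;>
      linarith [hfull 0 0 0 0, hfull 0 0 0 1, hfull 0 0 0 2, hfull 0 0 1 0, hfull 0 0 1 1,
        hfull 0 0 1 2, hfull 0 0 2 0, hfull 0 0 2 1, hfull 0 0 2 2,
        hfull 0 1 0 0, hfull 0 1 0 1, hfull 0 1 0 2, hfull 0 1 1 0, hfull 0 1 1 1,
        hfull 0 1 1 2, hfull 0 1 2 0, hfull 0 1 2 1, hfull 0 1 2 2,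
        hfull 0 2 0 0, hfull 0 2 0 1, hfull 0 2 0 2, hfull 0 2 1 0, hfull 0 2 1 1,
        hfull 0 2 1 2, hfull 0 2 2 0, hfull 0 2 2 1, hfull 0 2 2 2,
        hfull 1 0 0 0, hfull 1 0 0 1, hfull 1 0 0 2, hfull 1 0 1 0, hfull 1 0 1 1,
        hfull 1 0 1 2, hfull 1 0 2 0, hfull 1 0 2 1, hfull 1 0 2 2,
        hfull 1 1 0 0, hfull 1 1 0 1, hfull 1 1 0 2, hfull 1 1 1 0, hfull 1 1 1 1,
        hfull 1 1 1 2, hfull 1 1 2 0, hfull 1 1 2 1, hfull 1 1 2 2,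
        hfull 1 2 0 0, hfull 1 2 0 1, hfull 1 2 0 2, hfull 1 2 1 0, hfull 1 2 1 1,
        hfull 1 2 1 2, hfull 1 2 2 0, hfull 1 2 2 1, hfull 1 2 2 2,
        hfull 2 0 0 0, hfull 2 0 0 1, hfull 2 0 0 2, hfull 2 0 1 0, hfull 2 0 1 1,
        hfull 2 0 1 2, hfull 2 0 2 0, hfull 2 0 2 1, hfull 2 0 2 2,
        hfull 2 1 0 0, hfull 2 1 0 1, hfull 2 1 0 2, hfull 2 1 1 0, hfull 2 1 1 1,
        hfull 2 1 1 2, hfull 2 1 2 0, hfull 2 1 2 1, hfull 2 1 2 2,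
        hfull 2 2 0 0, hfull 2 2 0 1, hfull 2 2 0 2, hfull 2 2 1 0, hfull 2 2 1 1,
        hfull 2 2 1 2, hfull 2 2 2 0, hfull 2 2 2 1, hfull 2 2 2 2]
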